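/- Let (ΔM_m) be a martingale difference sequence with |ΔM_m| ≤ 1 a.s. Then M_n = ∑_{m=1}^n ΔM_m satisfies M_n = O(√(n log log n)) almost surely. -/

import Mathlib

open MeasureTheory Filter Finset Real
open scoped ENNReal NNReal

lemma exp_mul_le_of_abs_le {L x : ℝ} (hx : |x| ≤ 1) :
    Real.exp (L * x) ≤ Real.cosh L + Real.sinh L * x := by
  have h1 : 0 ≤ (1 - x)/2 := by rw [abs_le] at hx; linarith [hx.2]
  have h2 : 0 ≤ (1 + x)/2 := by rw [abs_le] at hx; linarith [hx.1]
  have hsum : (1 - x)/2 + (1 + x)/2 = 1 := by ring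
  have h := convexOn_exp.2 (Set.mem_univ (-L)) (Set.mem_univ L) h1 h2 hsum
  simp only [smul_eq_mul] at h
  have heq : (1 - x)/2 * (-L) + (1 + x)/2 * L = L * x := by ring
  rw [heq] at h
  refine h.trans_eq ?_
  rw [Real.cosh_eq, Real.sinh_eq]; ring

lemma tail_bound {Ω : Type*} {m0 : MeasurableSpace Ω} (μ : Measure Ω)
    [IsProbabilityMeasure μ] (ℱ : Filtration ℕ m0) (ΔM : ℕ → Ω → ℝ)
    (hadapted : ∀ m, StronglyMeasurable[ℱ m] (ΔM m))
    (hbdd : ∀ m, ∀ᵐ ω ∂μ, |ΔM m ω| ≤ 1)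
    (hmds : ∀ m, 1 ≤ m → μ[ΔM m | ℱ (m - 1)] =ᵐ[μ] 0)
    (n : ℕ) (a L : ℝ) (hL : 0 < L) :
    μ {ω | a ≤ (Finset.range (n+1)).sup' Finset.nonempty_range_add_one
        (fun k => ∑ m ∈ Finset.range k, ΔM (m+1) ω)} ≤
      ENNReal.ofReal (Real.exp ((n : ℝ) * L^2/2 - L * a)) := by
  set M : ℕ → Ω → ℝ := fun k ω => ∑ m ∈ Finset.range k, ΔM (m+1) ω with hM
  set f : ℕ → Ω → ℝ := fun k ω => Real.exp (L * M k ω) with hf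
  set g : ℕ → Ω → ℝ := fun k ω => Real.exp (L * ΔM (k+1) ω) with hg
  -- integrability helper
  have hint : ∀ (h : Ω → ℝ) (c : ℝ), AEStronglyMeasurable h μ →
      (∀ᵐ ω ∂μ, |h ω| ≤ c) → Integrable h μ := fun h c hh hhc =>
    Integrable.mono' (integrable_const c) hh (hhc.mono fun ω hw => by
      simpa [Real.norm_eq_abs] using hw)
  -- measurability
  have hMmeas : ∀ k, StronglyMeasurable[ℱ k] (M k) := by
    intro k
    apply Finset.stronglyMeasurable_fun_sum
    intro m hm
    exact (hadapted (m+1)).mono (ℱ.mono (Finset.mem_range.1 hm))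
  have hfadp : ∀ k, StronglyMeasurable[ℱ k] (f k) := fun k =>
    Real.continuous_exp.comp_stronglyMeasurable (stronglyMeasurable_const.mul (hMmeas k))
  have hgmeas : ∀ k, StronglyMeasurable[ℱ (k+1)] (g k) := fun k =>
    Real.continuous_exp.comp_stronglyMeasurable (stronglyMeasurable_const.mul (hadapted (k+1)))
  -- bounds
  have hMb : ∀ k, ∀ᵐ ω ∂μ, |M k ω| ≤ k := by
    intro k
    have hab : ∀ᵐ ω ∂μ, ∀ m, |ΔM m ω| ≤ 1 := ae_all_iff.2 hbdd
    filter_upwards [hab] with ω hω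
    calc |M k ω| ≤ ∑ m ∈ Finset.range k, |ΔM (m+1) ω| := Finset.abs_sum_le_sum_abs _ _
    _ ≤ ∑ _m ∈ Finset.range k, (1:ℝ) := Finset.sum_le_sum fun m _ => hω (m+1)
    _ = k := by simp
  have hfint : ∀ k, Integrable (f k) μ := by
    intro k
    refine hint _ (Real.exp (L * k)) ((hfadp k).mono (ℱ.le k)).aestronglyMeasurable ?_
    filter_upwards [hMb k] with ω hω
    rw [abs_of_pos (Real.exp_pos _), Real.exp_le_exp]
    have := (abs_le.1 hω).2
    nlinarith
  have hgint : ∀ k, Integrable (g k) μ := by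
    intro k
    refine hint _ (Real.exp L) ((hgmeas k).mono (ℱ.le _)).aestronglyMeasurable ?_
    filter_upwards [hbdd (k+1)] with ω hω
    rw [abs_of_pos (Real.exp_pos _), Real.exp_le_exp]
    have := (abs_le.1 hω).2
    nlinarith
  have hΔint : ∀ m, Integrable (ΔM m) μ := fun m =>
    hint _ 1 ((hadapted m).mono (ℱ.le _)).aestronglyMeasurable (hbdd m)
  -- condexp of increments
  have hg0 : ∀ k, μ[ΔM (k+1) | ℱ k] =ᵐ[μ] 0 := by
    intro k
    have := hmds (k+1) (Nat.le_add_left 1 k)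
    simpa using this
  have hup : ∀ k, μ[g k | ℱ k] ≤ᵐ[μ] fun _ => Real.cosh L := by
    intro k
    have hpt : g k ≤ᵐ[μ] fun ω => Real.cosh L + Real.sinh L * ΔM (k+1) ω := by
      filter_upwards [hbdd (k+1)] with ω hω
      exact exp_mul_le_of_abs_le hω
    have h1 : Integrable (fun ω => Real.cosh L + Real.sinh L * ΔM (k+1) ω) μ :=
      (integrable_const _).add ((hΔint (k+1)).const_mul _)
    have hmono := condExp_mono (m := ℱ k) (hgint k) h1 hpt
    have heq : μ[(fun ω => Real.cosh L + Real.sinh L * ΔM (k+1) ω) | ℱ k]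
        =ᵐ[μ] fun _ => Real.cosh L := by
      have hrw : (fun ω => Real.cosh L + Real.sinh L * ΔM (k+1) ω)
          = (fun _ => Real.cosh L) + (Real.sinh L) • (ΔM (k+1)) := by
        ext ω; simp [smul_eq_mul]
      rw [hrw]
      calc μ[(fun _ => Real.cosh L) + (Real.sinh L) • (ΔM (k+1)) | ℱ k]
          =ᵐ[μ] μ[(fun _ => Real.cosh L) | ℱ k] + μ[(Real.sinh L) • (ΔM (k+1)) | ℱ k] :=
            condExp_add (integrable_const _) ((hΔint (k+1)).smul _) _
        _ =ᵐ[μ] (fun _ => Real.cosh L) + (Real.sinh L) • μ[ΔM (k+1) | ℱ k] := by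
            rw [condExp_const (ℱ.le k)]
            exact EventuallyEq.add EventuallyEq.rfl (condExp_smul _ _ _)
        _ =ᵐ[μ] fun _ => Real.cosh L := by
            filter_upwards [hg0 k] with ω hω
            simp [hω]
    exact hmono.trans heq.le
  have hlo : ∀ k, (fun _ => (1:ℝ)) ≤ᵐ[μ] μ[g k | ℱ k] := by
    intro k
    have hpt : (fun ω => 1 + L * ΔM (k+1) ω) ≤ᵐ[μ] g k := by
      refine Eventually.of_forall fun ω => ?_
      have := Real.add_one_le_exp (L * ΔM (k+1) ω)
      simp only [hg]; linarith
    have h1 : Integrable (fun ω => 1 + L * ΔM (k+1) ω) μ :=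
      (integrable_const _).add ((hΔint (k+1)).const_mul _)
    have hmono := condExp_mono (m := ℱ k) h1 (hgint k) hpt
    have heq : μ[(fun ω => 1 + L * ΔM (k+1) ω) | ℱ k] =ᵐ[μ] fun _ => (1:ℝ) := by
      have hrw : (fun ω => 1 + L * ΔM (k+1) ω)
          = (fun _ => (1:ℝ)) + L • (ΔM (k+1)) := by
        ext ω; simp [smul_eq_mul]
      rw [hrw]
      calc μ[(fun _ => (1:ℝ)) + L • (ΔM (k+1)) | ℱ k]
          =ᵐ[μ] μ[(fun _ => (1:ℝ)) | ℱ k] + μ[L • (ΔM (k+1)) | ℱ k] :=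
            condExp_add (integrable_const _) ((hΔint (k+1)).smul _) _
        _ =ᵐ[μ] (fun _ => (1:ℝ)) + L • μ[ΔM (k+1) | ℱ k] := by
            rw [condExp_const (ℱ.le k)]
            exact EventuallyEq.add EventuallyEq.rfl (condExp_smul _ _ _)
        _ =ᵐ[μ] fun _ => (1:ℝ) := by
            filter_upwards [hg0 k] with ω hω
            simp [hω]
    exact heq.symm.le.trans hmono
  -- product structure
  have hprod : ∀ k, f (k+1) = f k * g k := by
    intro k
    ext ω
    simp only [hf, hg, hM, Pi.mul_apply, Finset.sum_range_succ, mul_add, Real.exp_add]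
  have hfgint : ∀ k, Integrable (f k * g k) μ := by
    intro k; rw [← hprod k]; exact hfint (k+1)
  have hpull : ∀ k, μ[f (k+1) | ℱ k] =ᵐ[μ] f k * μ[g k | ℱ k] := by
    intro k
    rw [hprod k]
    exact condExp_mul_of_stronglyMeasurable_left (hfadp k) (hfgint k) (hgint k)
  -- submartingale
  have hsub : Submartingale f ℱ μ := by
    refine submartingale_nat hfadp hfint fun k => ?_
    filter_upwards [hpull k, hlo k] with ω h1 h2
    rw [h1]
    have hfk : 0 ≤ f k ω := (Real.exp_pos _).le
    calc f k ω = f k ω * 1 := (mul_one _).symm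
      _ ≤ f k ω * (μ[g k | ℱ k]) ω := by
          exact mul_le_mul_of_nonneg_left h2 hfk
      _ = (f k * μ[g k | ℱ k]) ω := rfl
  -- moment bound
  have hmom : ∀ k, ∫ ω, f k ω ∂μ ≤ (Real.cosh L)^k := by
    intro k
    induction k with
    | zero => simp [hf, hM]
    | succ k ih =>
      have h1 : ∫ ω, f (k+1) ω ∂μ = ∫ ω, (μ[f (k+1) | ℱ k]) ω ∂μ :=
        (integral_condExp (ℱ.le k)).symm
      rw [h1]
      have h2 : μ[f (k+1) | ℱ k] ≤ᵐ[μ] fun ω => Real.cosh L * f k ω := by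
        filter_upwards [hpull k, hup k] with ω hω1 hω2
        rw [hω1]
        have hfk : 0 ≤ f k ω := (Real.exp_pos _).le
        calc f k ω * (μ[g k | ℱ k]) ω ≤ f k ω * Real.cosh L :=
              mul_le_mul_of_nonneg_left hω2 hfk
          _ = Real.cosh L * f k ω := mul_comm _ _
      have h3 : ∫ ω, (μ[f (k+1) | ℱ k]) ω ∂μ ≤ ∫ ω, Real.cosh L * f k ω ∂μ :=
        integral_mono_ae integrable_condExp ((hfint k).const_mul _) h2
      rw [integral_const_mul] at h3
      refine h3.trans ?_
      rw [pow_succ, mul_comm ((Real.cosh L)^k)]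
      exact mul_le_mul_of_nonneg_left ih (by positivity)
  have hmom' : ∫ ω, f n ω ∂μ ≤ Real.exp ((n:ℝ) * L^2/2) := by
    refine (hmom n).trans ?_
    calc (Real.cosh L)^n ≤ (Real.exp (L^2/2))^n :=
          pow_le_pow_left₀ (by positivity) (Real.cosh_le_exp_half_sq L) n
      _ = Real.exp ((n:ℝ) * (L^2/2)) := by rw [← Real.exp_nat_mul]
      _ = Real.exp ((n:ℝ) * L^2/2) := by ring_nf
  -- maximal inequality
  have hnonneg : 0 ≤ f := fun k ω => (Real.exp_pos _).le
  set ε : ℝ≥0 := Real.toNNReal (Real.exp (L * a)) with hε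
  have hεcoe : (ε : ℝ) = Real.exp (L * a) := Real.coe_toNNReal _ (Real.exp_pos _).le
  have hmax := maximal_ineq hsub hnonneg (ε := ε) n
  have hsetEq : {ω | (ε : ℝ) ≤ (Finset.range (n+1)).sup' Finset.nonempty_range_add_one
        fun k => f k ω}
      = {ω | a ≤ (Finset.range (n+1)).sup' Finset.nonempty_range_add_one fun k => M k ω} := by
    ext ω
    simp only [Set.mem_setOf_eq, Finset.le_sup'_iff, hεcoe]
    constructor
    · rintro ⟨k, hk, hke⟩
      refine ⟨k, hk, ?_⟩
      have : L * a ≤ L * M k ω := by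
        have := Real.exp_le_exp.1 hke
        exact this
      exact le_of_mul_le_mul_left this hL
    · rintro ⟨k, hk, hke⟩
      refine ⟨k, hk, ?_⟩
      exact Real.exp_le_exp.2 (mul_le_mul_of_nonneg_left hke hL.le)
  rw [hsetEq] at hmax
  set S := {ω | a ≤ (Finset.range (n+1)).sup' Finset.nonempty_range_add_one
      fun k => M k ω} with hS
  have h2 : ∫ ω in S, f n ω ∂μ ≤ ∫ ω, f n ω ∂μ :=
    setIntegral_le_integral (hfint n) (Eventually.of_forall fun ω => (Real.exp_pos _).le)
  have h3 : (ε : ℝ≥0∞) * μ S ≤ ENNReal.ofReal (Real.exp ((n:ℝ) * L^2/2)) := by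
    calc (ε : ℝ≥0∞) * μ S = ε • μ S := rfl
      _ ≤ ENNReal.ofReal (∫ ω in S, f n ω ∂μ) := hmax
      _ ≤ ENNReal.ofReal (Real.exp ((n:ℝ) * L^2/2)) :=
          ENNReal.ofReal_le_ofReal (h2.trans hmom')
  have hε0 : (ε : ℝ≥0∞) ≠ 0 := by
    simp only [ne_eq, ENNReal.coe_eq_zero]
    intro h
    rw [h] at hεcoe
    simp only [NNReal.coe_zero] at hεcoe
    exact absurd hεcoe (Real.exp_pos _).ne
  have hεtop : (ε : ℝ≥0∞) ≠ ⊤ := ENNReal.coe_ne_top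
  have h4 : μ S ≤ ENNReal.ofReal (Real.exp ((n:ℝ) * L^2/2)) / (ε : ℝ≥0∞) :=
    (ENNReal.le_div_iff_mul_le (Or.inl hε0) (Or.inl hεtop)).2 (by rwa [mul_comm] at h3)
  refine h4.trans ?_
  have hεofReal : (ε : ℝ≥0∞) = ENNReal.ofReal (Real.exp (L * a)) := rfl
  rw [hεofReal, ← ENNReal.ofReal_div_of_pos (Real.exp_pos _), ← Real.exp_sub]

set_option maxHeartbeats 1000000 in
lemma oneSided {Ω : Type*} {m0 : MeasurableSpace Ω} (μ : Measure Ω)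
    [IsProbabilityMeasure μ] (ℱ : Filtration ℕ m0) (ΔM : ℕ → Ω → ℝ)
    (hadapted : ∀ m, StronglyMeasurable[ℱ m] (ΔM m))
    (hbdd : ∀ m, ∀ᵐ ω ∂μ, |ΔM m ω| ≤ 1)
    (hmds : ∀ m, 1 ≤ m → μ[ΔM m | ℱ (m - 1)] =ᵐ[μ] 0) :
    ∀ᵐ ω ∂μ, ∃ C : ℝ, 0 ≤ C ∧ ∀ n : ℕ, 3 ≤ n →
      (∑ m ∈ Finset.Icc 1 n, ΔM m ω)
        ≤ C * Real.sqrt ((n : ℝ) * Real.log (Real.log n)) := by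
  have hlog2u : Real.log 2 < 0.6931471808 := Real.log_two_lt_d9
  have hlog2l : (0.6931471803 : ℝ) < Real.log 2 := Real.log_two_gt_d9
  set α : ℕ → ℝ := fun k => 2 * Real.sqrt ((2:ℝ)^k * Real.log ((k:ℝ) * Real.log 2)) with hα
  set B : ℕ → Set Ω := fun k => {ω | α k ≤ (Finset.range (2^k+1)).sup'
      Finset.nonempty_range_add_one (fun j => ∑ m ∈ Finset.range j, ΔM (m+1) ω)} with hB
  -- tail bound for each block
  have hBk : ∀ k, 2 ≤ k → μ (B k) ≤ ENNReal.ofReal (1/(((k:ℝ) * Real.log 2)^2)) := by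
    intro k hk
    have hkr : (2:ℝ) ≤ (k:ℝ) := by exact_mod_cast hk
    have htpos : (1:ℝ) < (k:ℝ) * Real.log 2 := by nlinarith
    have hLLpos : 0 < Real.log ((k:ℝ) * Real.log 2) := Real.log_pos htpos
    have hNpos : (0:ℝ) < (2:ℝ)^k := by positivity
    have hαpos : 0 < α k := by
      simp only [hα]
      have : (0:ℝ) < (2:ℝ)^k * Real.log ((k:ℝ) * Real.log 2) := by positivity
      positivity
    have hL : 0 < α k / (2:ℝ)^k := div_pos hαpos hNpos
    have := tail_bound μ ℱ ΔM hadapted hbdd hmds (2^k) (α k) (α k / (2:ℝ)^k) hL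
    refine this.trans_eq ?_
    congr 1
    have hcast : ((2^k : ℕ) : ℝ) = (2:ℝ)^k := by push_cast; ring
    rw [hcast]
    have hα2 : (α k)^2 = 4 * ((2:ℝ)^k * Real.log ((k:ℝ) * Real.log 2)) := by
      simp only [hα, mul_pow, Real.sq_sqrt (by positivity :
        (0:ℝ) ≤ (2:ℝ)^k * Real.log ((k:ℝ) * Real.log 2))]
      ring
    have hexp : (2:ℝ)^k * (α k / (2:ℝ)^k)^2/2 - (α k / (2:ℝ)^k) * α k
        = -(Real.log ((k:ℝ) * Real.log 2) + Real.log ((k:ℝ) * Real.log 2)) := by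
      field_simp
      nlinarith [hα2, hNpos]
    rw [hexp, Real.exp_neg, Real.exp_add, Real.exp_log (by linarith)]
    rw [one_div, sq]
  -- Borel-Cantelli
  have hsummable : Summable (fun j : ℕ => 1/((((j:ℕ)+2:ℕ):ℝ) * Real.log 2)^2) := by
    have h1 : Summable (fun j : ℕ => 1/((j:ℝ))^2) := by
      exact summable_one_div_nat_pow.2 (by norm_num)
    have h2 : Summable (fun j : ℕ => 1/(((j+2:ℕ)):ℝ)^2) := by
      exact (summable_nat_add_iff (f := fun j : ℕ => 1/((j:ℝ))^2) 2).2 h1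
    have h3 : Summable (fun j : ℕ => (1/(Real.log 2)^2) * (1/(((j+2:ℕ)):ℝ)^2)) :=
      h2.mul_left _
    refine h3.congr fun j => ?_
    rw [mul_pow]
    field_simp
  have hsum_ne_top : (∑' j : ℕ, μ (B (j+2))) ≠ ⊤ := by
    have hle : ∀ j : ℕ, μ (B (j+2)) ≤
        ENNReal.ofReal (1/((((j:ℕ)+2:ℕ):ℝ) * Real.log 2)^2) := fun j =>
      hBk (j+2) (by omega)
    refine ne_top_of_le_ne_top ?_ (ENNReal.tsum_le_tsum hle)
    rw [← ENNReal.ofReal_tsum_of_nonneg (fun j => by positivity) hsummable]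
    exact ENNReal.ofReal_ne_top
  have hae := ae_eventually_notMem hsum_ne_top
  have hab : ∀ᵐ ω ∂μ, ∀ m, |ΔM m ω| ≤ 1 := ae_all_iff.2 hbdd
  filter_upwards [hae, hab] with ω hω hb
  obtain ⟨J, hJ⟩ := eventually_atTop.1 hω
  set K := J + 8 with hK
  have hnotB : ∀ k, K ≤ k → ω ∉ B k := by
    intro k hk
    have : k = (k - 2) + 2 := by omega
    rw [this]
    exact hJ (k-2) (by omega)
  -- positivity facts
  have hlog3 : (1:ℝ) < Real.log 3 := by
    rw [Real.lt_log_iff_exp_lt (by norm_num : (0:ℝ) < 3)]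
    have := Real.exp_one_lt_d9
    linarith
  have hLL3 : 0 < Real.log (Real.log 3) := Real.log_pos hlog3
  have hs3 : 0 < Real.sqrt (3 * Real.log (Real.log 3)) := Real.sqrt_pos.2 (by positivity)
  refine ⟨max ((2:ℝ)^K / Real.sqrt (3 * Real.log (Real.log 3))) 4,
    le_trans (by norm_num) (le_max_right _ _), fun n hn => ?_⟩
  set C := max ((2:ℝ)^K / Real.sqrt (3 * Real.log (Real.log 3))) 4 with hC
  -- reindex the sum
  have hsum_eq : ∑ m ∈ Finset.Icc 1 n, ΔM m ω = ∑ m ∈ Finset.range n, ΔM (m+1) ω := by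
    rw [← Finset.Ico_add_one_right_eq_Icc, Finset.sum_Ico_eq_sum_range]
    simp only [Nat.add_sub_cancel]
    exact Finset.sum_congr rfl fun i _ => by rw [Nat.add_comm 1 i]
  rw [hsum_eq]
  -- common: sqrt(n LL n) ≥ sqrt(3 LL 3) > 0
  have hn3 : (3:ℝ) ≤ (n:ℝ) := by exact_mod_cast hn
  have hlogn : Real.log 3 ≤ Real.log n := Real.log_le_log (by norm_num) hn3
  have hLLn : Real.log (Real.log 3) ≤ Real.log (Real.log n) :=
    Real.log_le_log (by linarith) hlogn
  have hLLnpos : 0 < Real.log (Real.log n) := lt_of_lt_of_le hLL3 hLLn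
  have hprod : 3 * Real.log (Real.log 3) ≤ (n:ℝ) * Real.log (Real.log n) :=
    mul_le_mul hn3 hLLn hLL3.le (by linarith)
  have hsqrt_mono : Real.sqrt (3 * Real.log (Real.log 3))
      ≤ Real.sqrt ((n:ℝ) * Real.log (Real.log n)) := Real.sqrt_le_sqrt hprod
  by_cases hcase : n < 2^K
  · -- small n : trivial bound
    have hMn : ∑ m ∈ Finset.range n, ΔM (m+1) ω ≤ (n:ℝ) := by
      calc ∑ m ∈ Finset.range n, ΔM (m+1) ω
          ≤ ∑ _m ∈ Finset.range n, (1:ℝ) :=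
            Finset.sum_le_sum fun m _ => (abs_le.1 (hb (m+1))).2
        _ = n := by simp
    have hn2K : (n:ℝ) ≤ (2:ℝ)^K := by
      have : (n:ℝ) ≤ ((2^K : ℕ):ℝ) := by exact_mod_cast hcase.le
      rwa [Nat.cast_pow, Nat.cast_ofNat] at this
    calc ∑ m ∈ Finset.range n, ΔM (m+1) ω ≤ (2:ℝ)^K := hMn.trans hn2K
      _ = ((2:ℝ)^K / Real.sqrt (3 * Real.log (Real.log 3)))
          * Real.sqrt (3 * Real.log (Real.log 3)) := by field_simp
      _ ≤ C * Real.sqrt ((n:ℝ) * Real.log (Real.log n)) := by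
          refine mul_le_mul (le_max_left _ _) hsqrt_mono hs3.le ?_
          exact le_trans (by norm_num) (le_max_right _ _)
  · -- large n : use the block bound
    push_neg at hcase
    set k := Nat.log 2 n + 1 with hk
    have hn0 : n ≠ 0 := by omega
    have h1 : 2^(k-1) ≤ n := by
      simpa [hk] using Nat.pow_log_le_self 2 hn0
    have h2 : n < 2^k := Nat.lt_pow_succ_log_self (by norm_num) n
    have h3 : K ≤ Nat.log 2 n := (Nat.le_log_iff_pow_le (by norm_num) hn0).2 hcase
    have hkK : K ≤ k := by omega
    have hk9 : 9 ≤ k := by omega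
    have hnotBk := hnotB k hkK
    simp only [hB, Set.mem_setOf_eq, not_le] at hnotBk
    have hmem : n ∈ Finset.range (2^k + 1) := Finset.mem_range.2 (by omega)
    have hMn : ∑ m ∈ Finset.range n, ΔM (m+1) ω < α k :=
      lt_of_le_of_lt (Finset.le_sup' (fun j => ∑ m ∈ Finset.range j, ΔM (m+1) ω) hmem) hnotBk
    -- now show α k ≤ 4 * sqrt(n LL n)
    have hkr : (9:ℝ) ≤ (k:ℝ) := by exact_mod_cast hk9
    have hcast1 : ((2^(k-1) : ℕ):ℝ) = (2:ℝ)^(k-1) := by push_cast; ring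
    have h1r : (2:ℝ)^(k-1) ≤ (n:ℝ) := by
      rw [← hcast1]; exact_mod_cast h1
    have hA : (2:ℝ)^k ≤ 2 * (n:ℝ) := by
      have hk1 : k - 1 + 1 = k := by omega
      have : (2:ℝ)^k = 2 * (2:ℝ)^(k-1) := by
        rw [← pow_succ' 2 (k-1), hk1]
      rw [this]
      linarith
    have hkm1 : ((k-1 : ℕ):ℝ) = (k:ℝ) - 1 := by
      rw [Nat.cast_sub (by omega)]; norm_num
    have hlogn' : ((k:ℝ) - 1) * Real.log 2 ≤ Real.log n := by
      have := Real.log_le_log (by positivity) h1r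
      rwa [Real.log_pow, hkm1] at this
    have htk1 : (1:ℝ) < ((k:ℝ) - 1) * Real.log 2 := by nlinarith
    have hBineq : Real.log ((k:ℝ) * Real.log 2) ≤ 2 * Real.log (Real.log n) := by
      have hstep1 : Real.log ((k:ℝ) * Real.log 2)
          ≤ Real.log ((((k:ℝ) - 1) * Real.log 2)^2) := by
        apply Real.log_le_log (by nlinarith)
        nlinarith
      have hstep2 : Real.log ((((k:ℝ) - 1) * Real.log 2)^2)
          = 2 * Real.log (((k:ℝ) - 1) * Real.log 2) := by
        rw [Real.log_pow]; norm_num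
      have hstep3 : Real.log (((k:ℝ) - 1) * Real.log 2) ≤ Real.log (Real.log n) :=
        Real.log_le_log (by linarith) hlogn'
      linarith
    have hLLk_pos : 0 < Real.log ((k:ℝ) * Real.log 2) := Real.log_pos (by nlinarith)
    have hXY : (2:ℝ)^k * Real.log ((k:ℝ) * Real.log 2)
        ≤ 4 * ((n:ℝ) * Real.log (Real.log n)) := by
      calc (2:ℝ)^k * Real.log ((k:ℝ) * Real.log 2)
          ≤ (2 * (n:ℝ)) * (2 * Real.log (Real.log n)) :=
            mul_le_mul hA hBineq hLLk_pos.le (by positivity)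
        _ = 4 * ((n:ℝ) * Real.log (Real.log n)) := by ring
    have hαle : α k ≤ 4 * Real.sqrt ((n:ℝ) * Real.log (Real.log n)) := by
      simp only [hα]
      have hs := Real.sqrt_le_sqrt hXY
      have h4 : Real.sqrt (4 * ((n:ℝ) * Real.log (Real.log n)))
          = 2 * Real.sqrt ((n:ℝ) * Real.log (Real.log n)) := by
        rw [show (4:ℝ) = 2^2 by norm_num, Real.sqrt_mul (by positivity),
          Real.sqrt_sq (by norm_num : (0:ℝ) ≤ 2)]
      rw [h4] at hs
      linarith
    have hsn : 0 ≤ Real.sqrt ((n:ℝ) * Real.log (Real.log n)) := Real.sqrt_nonneg _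
    have hC4 : (4:ℝ) ≤ C := le_max_right _ _
    calc ∑ m ∈ Finset.range n, ΔM (m+1) ω ≤ 4 * Real.sqrt ((n:ℝ) * Real.log (Real.log n)) :=
          le_of_lt (hMn.trans_le hαle)
      _ ≤ C * Real.sqrt ((n:ℝ) * Real.log (Real.log n)) :=
          mul_le_mul_of_nonneg_right hC4 hsn

theorem stmt_16 {Ω : Type*} {m0 : MeasurableSpace Ω} (μ : Measure Ω)
    [IsProbabilityMeasure μ] (ℱ : Filtration ℕ m0)
    (ΔM : ℕ → Ω → ℝ)
    (hadapted : ∀ m, StronglyMeasurable[ℱ m] (ΔM m))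
    (hbdd : ∀ m, ∀ᵐ ω ∂μ, |ΔM m ω| ≤ 1)
    (hmds : ∀ m, 1 ≤ m → μ[ΔM m | ℱ (m - 1)] =ᵐ[μ] 0) :
    ∀ᵐ ω ∂μ, ∃ C : ℝ, ∀ n : ℕ, 3 ≤ n →
      |∑ m ∈ Finset.Icc 1 n, ΔM m ω|
        ≤ C * Real.sqrt ((n : ℝ) * Real.log (Real.log n)) := by
  have hpos := oneSided μ ℱ ΔM hadapted hbdd hmds
  have hneg := oneSided μ ℱ (fun m => -ΔM m) (fun m => (hadapted m).neg)
    (fun m => (hbdd m).mono fun ω h => by simpa [abs_neg] using h)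
    (fun m hm => by
      filter_upwards [condExp_neg (m := ℱ (m-1)) (μ := μ) (ΔM m), hmds m hm] with ω h1 h2
      simpa [h1] using h2)
  filter_upwards [hpos, hneg] with ω h1 h2
  obtain ⟨C1, hC1n, hC1⟩ := h1
  obtain ⟨C2, hC2n, hC2⟩ := h2
  refine ⟨max C1 C2, fun n hn => ?_⟩
  have hs : 0 ≤ Real.sqrt ((n : ℝ) * Real.log (Real.log n)) := Real.sqrt_nonneg _
  rw [abs_le]
  constructor
  · have := hC2 n hn
    simp only [Pi.neg_apply, Finset.sum_neg_distrib] at this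
    have h' : -(C2 * Real.sqrt ((n : ℝ) * Real.log (Real.log n)))
        ≤ ∑ m ∈ Finset.Icc 1 n, ΔM m ω := by linarith
    refine le_trans ?_ h'
    have : C2 ≤ max C1 C2 := le_max_right _ _
    nlinarith
  · exact (hC1 n hn).trans (mul_le_mul_of_nonneg_right (le_max_left _ _) hs)
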